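/- Let 𝒮 be a non-empty finite set, μ_s ∈ P_{2,ac}(ℝ^d) for s ∈ 𝒮, and weights w_s ≥ 0 summing to 1. Let λ ∈ P_{2,ac}(ℝ^d), Z ∼ λ, and S independent of Z with P(S=s) = w_s. Then for every f: ℝ^d × 𝒮 → ℝ^d with f(·, s) ∈ B(λ, μ_s) for all s, and h(z) := Σ_s w_s f(z, s), the Wasserstein barycenter functional satisfies Σ_s w_s W_2^2(h_#λ, μ_s) ≤ Σ_{i=1}^d E[Var(f_i(Z,S) | Z)]. -/

import Mathlib

open MeasureTheory ENNReal ProbabilityTheory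

/-- `g` is a `(μ,ν)`-inverse of `f`: `g ∘ f = id` μ-a.s. and `f ∘ g = id` ν-a.s. -/
def IsInvOf {d : ℕ} (μ ν : Measure (EuclideanSpace ℝ (Fin d)))
    (f g : EuclideanSpace ℝ (Fin d) → EuclideanSpace ℝ (Fin d)) : Prop :=
  (∀ᵐ x ∂μ, g (f x) = x) ∧ (∀ᵐ y ∂ν, f (g y) = y)

/-- `f ∈ B(μ, ν)`: `f` is Borel, pushes `μ` to `ν` and admits a `(μ,ν)`-inverse. -/
def MemB {d : ℕ} (μ ν : Measure (EuclideanSpace ℝ (Fin d)))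
    (f : EuclideanSpace ℝ (Fin d) → EuclideanSpace ℝ (Fin d)) : Prop :=
  Measurable f ∧ μ.map f = ν ∧ ∃ g, Measurable g ∧ IsInvOf μ ν f g

/-- `W_p^p(μ, ν)`: the Kantorovich optimal transport cost for the cost `‖x - y‖^p`. -/
noncomputable def Wpp {d : ℕ} (p : ℝ) (μ ν : Measure (EuclideanSpace ℝ (Fin d))) : ℝ≥0∞ :=
  ⨅ (γ : Measure (EuclideanSpace ℝ (Fin d) × EuclideanSpace ℝ (Fin d)))
    (_ : γ.map Prod.fst = μ) (_ : γ.map Prod.snd = ν),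
    ∫⁻ q, (‖q.1 - q.2‖₊ : ℝ≥0∞) ^ p ∂γ

lemma nnnorm_sq_eq_sum {d : ℕ} (x : EuclideanSpace ℝ (Fin d)) :
    (‖x‖₊ : ℝ≥0∞) ^ (2 : ℝ) = ENNReal.ofReal (∑ i, (x i) ^ 2) := by
  have h1 : (‖x‖₊ : ℝ≥0∞) = ENNReal.ofReal ‖x‖ := by rw [← coe_nnnorm, ENNReal.ofReal_coe_nnreal]
  rw [h1, ENNReal.ofReal_rpow_of_nonneg (norm_nonneg x) (by norm_num)]
  congr 1
  rw [Real.rpow_two, EuclideanSpace.norm_eq, Real.sq_sqrt (by positivity)]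
  exact Finset.sum_congr rfl fun i _ => by rw [Real.norm_eq_abs, sq_abs]

theorem stmt11 {d : ℕ} {Ω : Type*} [MeasurableSpace Ω] (P : Measure Ω)
    [IsProbabilityMeasure P]
    {𝒮 : Type*} [Fintype 𝒮] [Nonempty 𝒮] [MeasurableSpace 𝒮] [MeasurableSingletonClass 𝒮]
    (μ : 𝒮 → Measure (EuclideanSpace ℝ (Fin d)))
    (hμprob : ∀ s, IsProbabilityMeasure (μ s))
    (hμac : ∀ s, μ s ≪ (volume : Measure (EuclideanSpace ℝ (Fin d))))
    (hμm : ∀ s, ∫⁻ x, (‖x‖₊ : ℝ≥0∞) ^ (2 : ℝ) ∂(μ s) < ⊤)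
    (w : 𝒮 → ℝ) (hw0 : ∀ s, 0 ≤ w s) (hw1 : ∑ s, w s = 1)
    (lam : Measure (EuclideanSpace ℝ (Fin d))) [IsProbabilityMeasure lam]
    (hlac : lam ≪ (volume : Measure (EuclideanSpace ℝ (Fin d))))
    (hlm : ∫⁻ z, (‖z‖₊ : ℝ≥0∞) ^ (2 : ℝ) ∂lam < ⊤)
    (Z : Ω → EuclideanSpace ℝ (Fin d)) (S : Ω → 𝒮)
    (hZ : Measurable Z) (hS : Measurable S) (hZlaw : P.map Z = lam)
    (hindep : IndepFun Z S P)
    (hSlaw : ∀ s, P {ω | S ω = s} = ENNReal.ofReal (w s))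
    (f : EuclideanSpace ℝ (Fin d) → 𝒮 → EuclideanSpace ℝ (Fin d))
    (hf : ∀ s, MemB lam (μ s) fun z => f z s)
    (h : EuclideanSpace ℝ (Fin d) → EuclideanSpace ℝ (Fin d))
    (hh : h = fun z => ∑ s, w s • f z s) :
    ∑ s, ENNReal.ofReal (w s) * Wpp 2 (lam.map h) (μ s)
      ≤ ∑ i : Fin d, ∫⁻ ω, ENNReal.ofReal ((f (Z ω) (S ω) i - h (Z ω) i) ^ 2) ∂P := by
  have hfm : ∀ s, Measurable fun z => f z s := fun s => (hf s).1
  have hhm : Measurable h := by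
    rw [hh]; exact Finset.measurable_sum _ fun s _ => (hfm s).const_smul (w s)
  -- cost function
  set G : EuclideanSpace ℝ (Fin d) → 𝒮 → ℝ≥0∞ :=
    fun z s => (‖f z s - h z‖₊ : ℝ≥0∞) ^ (2 : ℝ) with hG
  have hGm : ∀ s, Measurable fun z => G z s := fun s =>
    (((hfm s).sub hhm).nnnorm.coe_nnreal_ennreal).pow_const _
  set I : 𝒮 → ℝ≥0∞ := fun s => ∫⁻ z, G z s ∂lam with hI
  -- Step A: Wpp bound via the obvious coupling
  have stepA : ∀ s, Wpp 2 (lam.map h) (μ s) ≤ I s := by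
    intro s
    set γ := lam.map (fun z => (h z, f z s)) with hγ
    have hpm : Measurable fun z => (h z, f z s) := hhm.prodMk (hfm s)
    have h1 : γ.map Prod.fst = lam.map h := by
      rw [hγ, Measure.map_map measurable_fst hpm]; rfl
    have h2 : γ.map Prod.snd = μ s := by
      rw [hγ, Measure.map_map measurable_snd hpm]; exact (hf s).2.1
    have h3 : (∫⁻ q, (‖q.1 - q.2‖₊ : ℝ≥0∞) ^ (2 : ℝ) ∂γ) = I s := by
      rw [hγ, lintegral_map (f := fun q : EuclideanSpace ℝ (Fin d) × EuclideanSpace ℝ (Fin d) =>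
          (‖q.1 - q.2‖₊ : ℝ≥0∞) ^ (2 : ℝ))
        ((measurable_fst.sub measurable_snd).nnnorm.coe_nnreal_ennreal.pow_const _) hpm]
      simp only [hI, hG]
      exact lintegral_congr fun z => by rw [← nnnorm_neg, neg_sub]
    calc Wpp 2 (lam.map h) (μ s)
        ≤ ⨅ (_ : γ.map Prod.fst = lam.map h) (_ : γ.map Prod.snd = μ s),
            ∫⁻ q, (‖q.1 - q.2‖₊ : ℝ≥0∞) ^ (2 : ℝ) ∂γ := iInf_le _ γ
      _ ≤ ∫⁻ q, (‖q.1 - q.2‖₊ : ℝ≥0∞) ^ (2 : ℝ) ∂γ := by rw [iInf_pos h1, iInf_pos h2]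
      _ = I s := h3
  -- Step B: compute the RHS
  have hfprod : Measurable fun p : EuclideanSpace ℝ (Fin d) × 𝒮 => G p.1 p.2 :=
    measurable_from_prod_countable_left fun s => hGm s
  have hZSm : Measurable fun ω => (Z ω, S ω) := hZ.prodMk hS
  have hlaw : P.map (fun ω => (Z ω, S ω)) = lam.prod (P.map S) := by
    rw [(indepFun_iff_map_prod_eq_prod_map_map hZ.aemeasurable hS.aemeasurable).mp hindep, hZlaw]
  have hSmass : ∀ s, (P.map S) {s} = ENNReal.ofReal (w s) := by
    intro s
    rw [Measure.map_apply hS (measurableSet_singleton s)]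
    exact hSlaw s
  have stepB : (∑ i : Fin d, ∫⁻ ω, ENNReal.ofReal ((f (Z ω) (S ω) i - h (Z ω) i) ^ 2) ∂P)
      = ∑ s, ENNReal.ofReal (w s) * I s := by
    have hterm : ∀ i : Fin d, Measurable fun ω =>
        ENNReal.ofReal ((f (Z ω) (S ω) i - h (Z ω) i) ^ 2) := by
      intro i
      have h1 : Measurable fun ω => f (Z ω) (S ω) i := by
        have : Measurable fun p : EuclideanSpace ℝ (Fin d) × 𝒮 => f p.1 p.2 i :=
          measurable_from_prod_countable_left fun s =>
            ((by fun_prop : Measurable fun x : EuclideanSpace ℝ (Fin d) => x i).comp (hfm s))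
        exact this.comp hZSm
      exact (((h1.sub (((by fun_prop : Measurable fun x : EuclideanSpace ℝ (Fin d) => x i).comp hhm).comp hZ)).pow_const 2)).ennreal_ofReal
    rw [← lintegral_finset_sum _ fun i _ => hterm i]
    have key : ∀ ω, (∑ i : Fin d, ENNReal.ofReal ((f (Z ω) (S ω) i - h (Z ω) i) ^ 2))
        = G (Z ω) (S ω) := by
      intro ω
      simp only [hG]
      rw [nnnorm_sq_eq_sum]
      rw [← ENNReal.ofReal_sum_of_nonneg (fun i _ => sq_nonneg _)]
      rfl
    calc (∫⁻ ω, ∑ i : Fin d, ENNReal.ofReal ((f (Z ω) (S ω) i - h (Z ω) i) ^ 2) ∂P)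
        = ∫⁻ ω, G (Z ω) (S ω) ∂P := lintegral_congr key
      _ = ∫⁻ p, G p.1 p.2 ∂(P.map (fun ω => (Z ω, S ω))) :=
          (lintegral_map hfprod hZSm).symm
      _ = ∫⁻ z, ∫⁻ s, G z s ∂(P.map S) ∂lam := by rw [hlaw, lintegral_prod _ hfprod.aemeasurable]
      _ = ∫⁻ z, ∑ s, G z s * ENNReal.ofReal (w s) ∂lam := by
          refine lintegral_congr fun z => ?_
          rw [lintegral_fintype]
          exact Finset.sum_congr rfl fun s _ => by rw [hSmass]
      _ = ∑ s, ENNReal.ofReal (w s) * I s := by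
          rw [lintegral_finset_sum _ fun s _ => (hGm s).mul_const _]
          refine Finset.sum_congr rfl fun s _ => ?_
          rw [lintegral_mul_const _ (hGm s), mul_comm]
  rw [stepB]
  exact Finset.sum_le_sum fun s _ => mul_le_mul_of_nonneg_left (stepA s) zero_le
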